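/- Let a, b₁, b₂, m₁, m₂, l₁, l₂, k₁, k₂, n₁, n₂, c : [0,T] → ℝ be continuous with m₁, m₂ > 0, and r₁, r₂ ≥ 0, h₁, h₂ ∈ ℝ. Consider the two-point boundary value problem for (ȳ, x̄₁, x̄₂) : [0,T] → ℝ³: -ȳ' = aȳ + (b₁²/m₁)x̄₁ + (b₂²/m₂)x̄₂ + b₁n₁ + b₂n₂ + c, x̄₁' = ax̄₁ - l₁(ȳ - k₁), x̄₂' = ax̄₂ - l₂(ȳ - k₂), with ȳ(T) = ξ̄, x̄₁(0) = -r₁(ȳ(0) - h₁), x̄₂(0) = -r₂(ȳ(0) - h₂). If (ȳ, x̄₁, x̄₂) is a solution and we set n̄ = x̄₁ + x̄₂, then (ȳ, n̄) solves: -ȳ' = aȳ + (b₁²/m₁)n̄ + b₁n₁ + b₂n₂ + c, n̄' = an̄ - (l₁+l₂)ȳ + l₁k₁ + l₂k₂, ȳ(T) = ξ̄, n̄(0) = -(r₁+r₂)ȳ(0) + r₁h₁ + r₂h₂, provided b₁²/m₁ = b₂²/m₂ pointwise. Conversely, given a solution (ȳ, n̄) of the reduced system, defining x̄₁, x̄₂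 as the unique solutions of the linear initial value problems x̄ᵢ' = ax̄ᵢ - lᵢ(ȳ - kᵢ), x̄ᵢ(0) = -rᵢ(ȳ(0)-hᵢ), one has x̄₁ + x̄₂ = n̄. -/

import Mathlib

open Set

theorem bvp_reduction (T : ℝ) (hT : 0 < T) (r₁ r₂ h₁ h₂ ξo : ℝ)
    (hr₁ : 0 ≤ r₁) (hr₂ : 0 ≤ r₂)
    (a b₁ b₂ m₁ m₂ l₁ l₂ k₁ k₂ n₁ n₂ c : ℝ → ℝ)
    (ha : ContinuousOn a (Icc 0 T)) (hb₁ : ContinuousOn b₁ (Icc 0 T))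
    (hb₂ : ContinuousOn b₂ (Icc 0 T)) (hm₁c : ContinuousOn m₁ (Icc 0 T))
    (hm₂c : ContinuousOn m₂ (Icc 0 T)) (hl₁ : ContinuousOn l₁ (Icc 0 T))
    (hl₂ : ContinuousOn l₂ (Icc 0 T)) (hk₁ : ContinuousOn k₁ (Icc 0 T))
    (hk₂ : ContinuousOn k₂ (Icc 0 T)) (hn₁ : ContinuousOn n₁ (Icc 0 T))
    (hn₂ : ContinuousOn n₂ (Icc 0 T)) (hc : ContinuousOn c (Icc 0 T))
    (hm₁ : ∀ t ∈ Icc (0:ℝ) T, 0 < m₁ t) (hm₂ : ∀ t ∈ Icc (0:ℝ) T, 0 < m₂ t)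
    (hsym : ∀ t ∈ Icc (0:ℝ) T, b₁ t ^ 2 / m₁ t = b₂ t ^ 2 / m₂ t) :
    -- forward direction: a solution of the full system yields a solution of the
    -- reduced system via nb = xb₁ + xb₂
    (∀ yb xb₁ xb₂ : ℝ → ℝ,
      (∀ t ∈ Icc (0:ℝ) T, HasDerivAt yb
        (-(a t * yb t + b₁ t ^ 2 / m₁ t * xb₁ t + b₂ t ^ 2 / m₂ t * xb₂ t
          + b₁ t * n₁ t + b₂ t * n₂ t + c t)) t) →
      (∀ t ∈ Icc (0:ℝ) T, HasDerivAt xb₁ (a t * xb₁ t - l₁ t * (yb t - k₁ t)) t) →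
      (∀ t ∈ Icc (0:ℝ) T, HasDerivAt xb₂ (a t * xb₂ t - l₂ t * (yb t - k₂ t)) t) →
      yb T = ξo → xb₁ 0 = -r₁ * (yb 0 - h₁) → xb₂ 0 = -r₂ * (yb 0 - h₂) →
      ((∀ t ∈ Icc (0:ℝ) T, HasDerivAt yb
        (-(a t * yb t + b₁ t ^ 2 / m₁ t * (xb₁ t + xb₂ t)
          + b₁ t * n₁ t + b₂ t * n₂ t + c t)) t) ∧
       (∀ t ∈ Icc (0:ℝ) T, HasDerivAt (fun s => xb₁ s + xb₂ s)
        (a t * (xb₁ t + xb₂ t) - (l₁ t + l₂ t) * yb t + l₁ t * k₁ t + l₂ t * k₂ t) t) ∧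
       yb T = ξo ∧ xb₁ 0 + xb₂ 0 = -(r₁ + r₂) * yb 0 + r₁ * h₁ + r₂ * h₂))
    ∧
    -- converse: from a solution of the reduced system and the two linear IVPs,
    -- the sum of the components recovers nb
    (∀ yb nb xb₁ xb₂ : ℝ → ℝ,
      (∀ t ∈ Icc (0:ℝ) T, HasDerivAt yb
        (-(a t * yb t + b₁ t ^ 2 / m₁ t * nb t
          + b₁ t * n₁ t + b₂ t * n₂ t + c t)) t) →
      (∀ t ∈ Icc (0:ℝ) T, HasDerivAt nb
        (a t * nb t - (l₁ t + l₂ t) * yb t + l₁ t * k₁ t + l₂ t * k₂ t) t) →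
      yb T = ξo → nb 0 = -(r₁ + r₂) * yb 0 + r₁ * h₁ + r₂ * h₂ →
      (∀ t ∈ Icc (0:ℝ) T, HasDerivAt xb₁ (a t * xb₁ t - l₁ t * (yb t - k₁ t)) t) →
      (∀ t ∈ Icc (0:ℝ) T, HasDerivAt xb₂ (a t * xb₂ t - l₂ t * (yb t - k₂ t)) t) →
      xb₁ 0 = -r₁ * (yb 0 - h₁) → xb₂ 0 = -r₂ * (yb 0 - h₂) →
      ∀ t ∈ Icc (0:ℝ) T, xb₁ t + xb₂ t = nb t) := by
  constructor
  · intro yb xb₁ xb₂ hyb hx1 hx2 hybT hx10 hx20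
    refine ⟨fun t ht => ?_, fun t ht => ?_, hybT, by rw [hx10, hx20]; ring⟩
    · have := hyb t ht
      have hs := hsym t ht
      convert this using 2
      rw [hs]; ring
    · have := (hx1 t ht).add (hx2 t ht)
      convert this using 1
      · rfl
      · rfl
      · rfl
      ring
  · intro yb nb xb₁ xb₂ hyb hnb hybT hnb0 hx1 hx2 hx10 hx20
    -- bound on a
    obtain ⟨M, hM⟩ : ∃ M : ℝ, ∀ t ∈ Icc (0:ℝ) T, |a t| ≤ M := by
      obtain ⟨M, hM⟩ := (isCompact_Icc.image_of_continuousOn ha).isBounded.subset_closedBall 0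
      exact ⟨M, fun t ht => by
        simpa [Real.dist_eq] using hM (mem_image_of_mem a ht)⟩
    set A : ℝ → ℝ := fun t => if t ∈ Icc (0:ℝ) T then a t else 0 with hA
    set v : ℝ → ℝ → ℝ := fun t x =>
      A t * x - (l₁ t + l₂ t) * yb t + l₁ t * k₁ t + l₂ t * k₂ t with hv
    have hMnn : 0 ≤ max M 0 := le_max_right _ _
    have hlip : ∀ t, LipschitzOnWith ⟨max M 0, hMnn⟩ (v t) univ := by
      intro t
      apply LipschitzWith.lipschitzOnWith
      apply LipschitzWith.of_dist_le_mul
      intro x y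
      simp only [hv, Real.dist_eq]
      have hAb : |A t| ≤ max M 0 := by
        by_cases h : t ∈ Icc (0:ℝ) T
        · simp only [hA, if_pos h]
          exact le_trans (hM t h) (le_max_left _ _)
        · simp only [hA]; rw [if_neg h]; simpa using hMnn
      calc |A t * x - (l₁ t + l₂ t) * yb t + l₁ t * k₁ t + l₂ t * k₂ t -
            (A t * y - (l₁ t + l₂ t) * yb t + l₁ t * k₁ t + l₂ t * k₂ t)|
          = |A t| * |x - y| := by rw [← abs_mul]; ring_nf
        _ ≤ max M 0 * |x - y| := by gcongr
    have hfc : ContinuousOn (fun s => xb₁ s + xb₂ s) (Icc 0 T) :=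
      fun t ht => (((hx1 t ht).add (hx2 t ht)).continuousAt).continuousWithinAt
    have hgc : ContinuousOn nb (Icc 0 T) :=
      fun t ht => ((hnb t ht).continuousAt).continuousWithinAt
    have hf' : ∀ t ∈ Ico (0:ℝ) T, HasDerivWithinAt (fun s => xb₁ s + xb₂ s)
        (v t (xb₁ t + xb₂ t)) (Ici t) t := by
      intro t ht
      have ht' : t ∈ Icc (0:ℝ) T := Ico_subset_Icc_self ht
      have key : v t (xb₁ t + xb₂ t) = (a t * xb₁ t - l₁ t * (yb t - k₁ t))
          + (a t * xb₂ t - l₂ t * (yb t - k₂ t)) := by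
        simp only [hv, hA, if_pos ht']; ring
      rw [key]
      exact ((hx1 t ht').add (hx2 t ht')).hasDerivWithinAt
    have hg' : ∀ t ∈ Ico (0:ℝ) T, HasDerivWithinAt nb (v t (nb t)) (Ici t) t := by
      intro t ht
      have ht' : t ∈ Icc (0:ℝ) T := Ico_subset_Icc_self ht
      have key : v t (nb t) = a t * nb t - (l₁ t + l₂ t) * yb t
          + l₁ t * k₁ t + l₂ t * k₂ t := by
        simp only [hv, hA, if_pos ht']
      rw [key]
      exact (hnb t ht').hasDerivWithinAt
    have h0 : xb₁ 0 + xb₂ 0 = nb 0 := by rw [hx10, hx20, hnb0]; ring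
    exact fun t ht =>
      ODE_solution_unique_of_mem_Icc_right (fun t _ => hlip t) hfc hf' (fun _ _ => mem_univ _)
        hgc hg' (fun _ _ => mem_univ _) h0 ht
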